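/- Let n ≥ 2 and let Γ be the graph obtained from the complete graph K_{2n} on vertices {u₁,…,u_n, v₁,…,v_n} by removing the perfect matching {u_i v_i : 1 ≤ i ≤ n} (i.e., the cocktail party graph). Then the pair of permutations α = (u₁ u₂ … u_n) and β = (v₁ v₂ … v_n) is a TFS-morphism of Γ. -/

import Mathlib

def IsTF {V : Type*} (G : SimpleGraph V) (α β : Equiv.Perm V) : Prop :=
  ∀ u v : V, G.Adj u v → G.Adj (α u) (β v)

def IsTFS {V : Type*} (G : SimpleGraph V) (α β : Equiv.Perm V) : Prop :=
  (∀ u : V, G.Adj (α u) (β u)) ∧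
    ∀ u v : V, G.Adj u v → G.Adj (α u) (β v) ∨ α u = β v

/-- The cocktail party graph: `K_{2n}` minus a perfect matching.  Vertices are
pairs `(s, i)` with `s : Bool` (`false` for the `uᵢ`'s, `true` for the `vᵢ`'s),
and `(s, i) ~ (t, j)` iff `i ≠ j`. -/
def cocktail (n : ℕ) : SimpleGraph (Bool × ZMod n) where
  Adj p q := p.2 ≠ q.2
  symm := by
    constructor
    rintro p q h
    exact h.symm
  loopless := by
    constructor
    rintro p h
    exact h rfl

theorem stmt14 (n : ℕ) (hn : 2 ≤ n)
    (α β : Equiv.Perm (Bool × ZMod n))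
    (hαu : ∀ i : ZMod n, α (false, i) = (false, i + 1))
    (hαv : ∀ i : ZMod n, α (true, i) = (true, i))
    (hβu : ∀ i : ZMod n, β (false, i) = (false, i))
    (hβv : ∀ i : ZMod n, β (true, i) = (true, i + 1)) :
    IsTFS (cocktail n) α β := by
  haveI : Fact (1 < n) := ⟨hn⟩
  have hone : (1 : ZMod n) ≠ 0 := one_ne_zero
  constructor
  · rintro ⟨s, i⟩
    cases s
    · rw [hαu, hβu]
      show i + 1 ≠ i
      intro h
      exact hone (by linear_combination h)
    · rw [hαv, hβv]
      show i ≠ i + 1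
      intro h
      exact hone (by linear_combination -h)
  · rintro ⟨s, i⟩ ⟨t, j⟩ (hij : i ≠ j)
    cases s <;> cases t
    · rw [hαu, hβu]
      by_cases h : i + 1 = j
      · exact Or.inr (by rw [h])
      · exact Or.inl h
    · rw [hαu, hβv]
      exact Or.inl (fun h => hij (by linear_combination h))
    · rw [hαv, hβu]
      exact Or.inl hij
    · rw [hαv, hβv]
      by_cases h : i = j + 1
      · exact Or.inr (by rw [h])
      · exact Or.inl h
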